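/- arXiv:1708.00635 — 4 statements merged into one kernel-verified Lean document; each statement's English description precedes it below -/
import Mathlib

section
/- Mean convergence under common eigenvectors: suppose additionally C[k] = U D[k] Uᴴ for every k ∈ {0,…,N₀−1}, where U is a unitary M×M matrix and each D[k] is a real diagonal matrix with nonnegative entries. Then ρ(Φ(k,k)) < 1 for every k ∈ {0,…,N₀−1} (equivalently, the mean-error recursion is asymptotically periodic for every initial condition) if and only if max over m ∈ {0,…,M−1} of ∏_{l=0}^{N₀−1} |1 − μ (D[l])_{m,m}| is strictly less than 1. -/
open Matrix Filter
open scoped ComplexOrder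

noncomputable section

/-- Spectral radius of a complex matrix: the maximum modulus of its eigenvalues. -/
def specRad {n : Type*} [Fintype n] [DecidableEq n] (A : Matrix n n ℂ) : ℝ :=
  sSup ((fun z : ℂ => ‖z‖) '' spectrum ℂ A)

/-- Product of matrices `A (a + len - 1) * ⋯ * A (a + 1) * A a`
(factors with decreasing index from left to right; empty product is `1`). -/
def prodDesc {M : ℕ} (A : ℕ → Matrix (Fin M) (Fin M) ℂ) (a : ℕ) :
    ℕ → Matrix (Fin M) (Fin M) ℂ
  | 0 => 1
  | (len + 1) => A (a + len) * prodDesc A a len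

lemma prod_shift_mod' {β : Type*} [CommMonoid β] (f : ℕ → β) (N : ℕ) (hN : 0 < N) (a : ℕ) :
    ∏ j ∈ Finset.range N, f ((a + j) % N) = ∏ j ∈ Finset.range N, f j := by
  induction a with
  | zero =>
    refine Finset.prod_congr rfl fun j hj => ?_
    rw [Nat.zero_add, Nat.mod_eq_of_lt (Finset.mem_range.mp hj)]
  | succ a ih =>
    rw [← ih]
    obtain ⟨n, rfl⟩ : ∃ n, N = n + 1 := ⟨N - 1, by omega⟩
    set g : ℕ → β := fun j => f ((a + j) % (n + 1)) with hg
    have h1 : ∏ j ∈ Finset.range (n + 1), f ((a + 1 + j) % (n + 1))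
        = ∏ j ∈ Finset.range (n + 1), g (j + 1) := by
      refine Finset.prod_congr rfl fun j hj => ?_
      simp only [hg]
      rw [show a + 1 + j = a + (j + 1) from by omega]
    rw [h1, Finset.prod_range_succ, Finset.prod_range_succ' g n]
    congr 1
    simp only [hg]
    congr 1
    conv_lhs => rw [show a + (n + 1) = a + 0 + 1 * (n+1) by ring]
    rw [Nat.add_mul_mod_self_right]

lemma prodDesc_conj {M N₀ : ℕ} (hN : 1 ≤ N₀) (μ : ℝ)
    (C : ℕ → Matrix (Fin M) (Fin M) ℂ)
    (U : Matrix (Fin M) (Fin M) ℂ) (hU : U ∈ Matrix.unitaryGroup (Fin M) ℂ)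
    (D : ℕ → Fin M → ℝ)
    (hCU : ∀ k < N₀, C k = U * Matrix.diagonal (fun i => (D k i : ℂ)) * U.conjTranspose)
    (a : ℕ) :
    ∀ len, prodDesc (fun l => (1 : Matrix (Fin M) (Fin M) ℂ) - (μ : ℂ) • C (l % N₀)) a len
      = U * Matrix.diagonal
          (fun i => ∏ j ∈ Finset.range len, (1 - (μ : ℂ) * (D ((a + j) % N₀) i))) *
        U.conjTranspose := by
  have hUU : U * U.conjTranspose = 1 := Matrix.mem_unitaryGroup_iff.mp hU
  have hUU' : U.conjTranspose * U = 1 := Matrix.mem_unitaryGroup_iff'.mp hU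
  intro len
  induction len with
  | zero =>
    simp [prodDesc, hUU]
  | succ len ih =>
    have hm : (a + len) % N₀ < N₀ := Nat.mod_lt _ (by omega)
    have hfac : (1 : Matrix (Fin M) (Fin M) ℂ) - (μ : ℂ) • C ((a + len) % N₀)
        = U * Matrix.diagonal (fun i => 1 - (μ : ℂ) * (D ((a + len) % N₀) i)) * U.conjTranspose := by
      rw [hCU _ hm]
      have h2 : (Matrix.diagonal (fun i => 1 - (μ : ℂ) * (D ((a + len) % N₀) i))
          : Matrix (Fin M) (Fin M) ℂ)
          = 1 - (μ : ℂ) • Matrix.diagonal (fun i => (D ((a + len) % N₀) i : ℂ)) := by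
        ext i j
        rcases eq_or_ne i j with h | h
        · subst h
          simp [Matrix.diagonal_apply_eq, Matrix.one_apply_eq]
        · simp [Matrix.diagonal_apply_ne _ h, Matrix.one_apply_ne h]
      conv_rhs => rw [h2]
      rw [Matrix.mul_sub, Matrix.sub_mul, Matrix.mul_one, hUU, Matrix.mul_smul,
        Matrix.smul_mul]
    rw [prodDesc, ih, hfac]
    rw [show ∀ (P Q R S T : Matrix (Fin M) (Fin M) ℂ), (P * Q * R) * (S * T * R) = P * (Q * (R * S) * T) * R
      from fun P Q R S T => by noncomm_ring]
    rw [hUU', Matrix.mul_one, Matrix.diagonal_mul_diagonal]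
    have h3 : (fun i => (1 - (μ : ℂ) * (D ((a + len) % N₀) i))
          * ∏ j ∈ Finset.range len, (1 - (μ : ℂ) * (D ((a + j) % N₀) i)))
        = fun i => ∏ j ∈ Finset.range (len + 1), (1 - (μ : ℂ) * (D ((a + j) % N₀) i)) := by
      funext i
      rw [Finset.prod_range_succ]
      ring
    rw [h3]

lemma specRad_conj_diag {M : ℕ} (U : Matrix (Fin M) (Fin M) ℂ)
    (hU : U ∈ Matrix.unitaryGroup (Fin M) ℂ) (d : Fin M → ℂ) :
    specRad (U * Matrix.diagonal d * U.conjTranspose) = ⨆ i, ‖d i‖ := by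
  have hUU : U * U.conjTranspose = 1 := Matrix.mem_unitaryGroup_iff.mp hU
  have hUU' : U.conjTranspose * U = 1 := Matrix.mem_unitaryGroup_iff'.mp hU
  set u : (Matrix (Fin M) (Fin M) ℂ)ˣ := ⟨U, U.conjTranspose, hUU, hUU'⟩ with hu
  have hspec : spectrum ℂ (U * Matrix.diagonal d * U.conjTranspose)
      = spectrum ℂ (Matrix.diagonal d) := by
    have := spectrum.units_conjugate (R := ℂ) (a := Matrix.diagonal d) (u := u)
    simpa [hu] using this
  rw [specRad, hspec, spectrum_diagonal, ← Set.range_comp]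
  rfl

/-- **Mean convergence under common eigenvectors**: if `C[k] = U D[k] Uᴴ` with `U`
unitary and `D[k]` real diagonal with nonnegative entries, then `ρ(Φ(k,k)) < 1` for
every `k < N₀` iff `max_m ∏_{l=0}^{N₀−1} |1 − μ (D[l])_{m,m}| < 1`. -/
theorem lms_mean_convergence_common_eigenvectors
    {M N₀ : ℕ} (hM : 1 ≤ M) (hN : 1 ≤ N₀) (μ : ℝ) (hμ : 0 < μ)
    (C : ℕ → Matrix (Fin M) (Fin M) ℂ) (g : ℕ → Fin M → ℂ)
    (hC : ∀ k < N₀, (C k).PosSemidef)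
    (U : Matrix (Fin M) (Fin M) ℂ) (hU : U ∈ Matrix.unitaryGroup (Fin M) ℂ)
    (D : ℕ → Fin M → ℝ) (hD : ∀ k, ∀ i, 0 ≤ D k i)
    (hCU : ∀ k < N₀, C k = U * Matrix.diagonal (fun i => (D k i : ℂ)) * U.conjTranspose) :
    (∀ k < N₀,
        specRad (prodDesc (fun l => (1 : Matrix (Fin M) (Fin M) ℂ) - (μ : ℂ) • C (l % N₀)) k N₀)
          < 1) ↔
      (⨆ i : Fin M, ∏ l ∈ Finset.range N₀, |1 - μ * D l i|) < 1 := by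
  have key : ∀ a : ℕ,
      specRad (prodDesc (fun l => (1 : Matrix (Fin M) (Fin M) ℂ) - (μ : ℂ) • C (l % N₀)) a N₀)
        = ⨆ i : Fin M, ∏ l ∈ Finset.range N₀, |1 - μ * D l i| := by
    intro a
    rw [prodDesc_conj hN μ C U hU D hCU a N₀, specRad_conj_diag U hU]
    congr 1
    funext i
    have hcast : ∏ j ∈ Finset.range N₀, (1 - (μ : ℂ) * (D ((a + j) % N₀) i))
        = ((∏ j ∈ Finset.range N₀, (1 - μ * D ((a + j) % N₀) i) : ℝ) : ℂ) := by
      push_cast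
      rfl
    rw [hcast, Complex.norm_real, Real.norm_eq_abs, Finset.abs_prod,
      prod_shift_mod' (fun l => |1 - μ * D l i|) N₀ (by omega) a]
  constructor
  · intro h
    have := h 0 (by omega)
    rwa [key 0] at this
  · intro h k _
    rw [key k]
    exact h
end
end

section
/- First sufficient condition for mean convergence: if ∏_{k=0}^{N₀−1} max( 1 − μ λmin(C[k]), μ λmax(C[k]) − 1 ) < 1, then ρ(Φ(k,k)) < 1 for every k ∈ {0,…,N₀−1} (so the mean-error recursion is asymptotically periodic for every initial condition). -/
open Matrix Filter
open scoped ComplexOrder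

noncomputable section

/-- The largest real eigenvalue of a complex matrix. -/
def lamMax {n : Type*} [Fintype n] [DecidableEq n] (A : Matrix n n ℂ) : ℝ :=
  sSup {t : ℝ | (t : ℂ) ∈ spectrum ℂ A}

/-- The smallest real eigenvalue of a complex matrix. -/
def lamMin {n : Type*} [Fintype n] [DecidableEq n] (A : Matrix n n ℂ) : ℝ :=
  sInf {t : ℝ | (t : ℂ) ∈ spectrum ℂ A}

open scoped Matrix.Norms.L2Operator Pointwise

instance matrixCStarAlgebra {n : Type*} [Fintype n] [DecidableEq n] :
    CStarAlgebra (Matrix n n ℂ) where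

section Aux
variable {n : Type*} [Fintype n] [DecidableEq n]

lemma norm_le_of_isSelfAdjoint {a : Matrix n n ℂ} (ha : IsSelfAdjoint a) {r : ℝ} (hr : 0 ≤ r)
    (h : ∀ z ∈ spectrum ℂ a, ‖z‖ ≤ r) : ‖a‖ ≤ r := by
  have h1 := ha.spectralRadius_eq_nnnorm
  have h2 : spectralRadius ℂ a ≤ ENNReal.ofReal r := by
    rw [spectralRadius]
    refine iSup₂_le fun z hz => ?_
    rw [← ENNReal.ofReal_coe_nnreal, coe_nnnorm]
    exact ENNReal.ofReal_le_ofReal (h z hz)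
  rw [h1] at h2
  have := ENNReal.toReal_mono (by simp) h2
  simpa [ENNReal.toReal_ofReal hr] using this

lemma spec_shape {μ : ℝ} (hμ : μ ≠ 0) {Cm : Matrix n n ℂ} (hC : Cm.IsHermitian)
    {z : ℂ} (hz : z ∈ spectrum ℂ ((1 : Matrix n n ℂ) - (μ : ℂ) • Cm)) :
    ∃ t : ℝ, (t : ℂ) ∈ spectrum ℂ Cm ∧ z = 1 - μ * t := by
  have h1 : spectrum ℂ ((1 : Matrix n n ℂ) - (μ : ℂ) • Cm)
      = ({(1 : ℂ)} : Set ℂ) - spectrum ℂ ((μ : ℂ) • Cm) := by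
    have := spectrum.singleton_sub_eq ((μ : ℂ) • Cm) (1 : ℂ)
    rwa [_root_.map_one, eq_comm] at this
  have hμ' : (μ : ℂ) ≠ 0 := by exact_mod_cast hμ
  have h2 : spectrum ℂ ((μ : ℂ) • Cm) = (μ : ℂ) • spectrum ℂ Cm := by
    simpa using spectrum.unit_smul_eq_smul Cm (Units.mk0 (μ : ℂ) hμ')
  rw [h1, h2] at hz
  obtain ⟨x, hx, y, hy, hxy⟩ := Set.mem_sub.mp hz
  obtain ⟨v, hv, rfl⟩ := hy
  have hvre : v = (v.re : ℂ) := hC.isSelfAdjoint.mem_spectrum_eq_re hv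
  refine ⟨v.re, by rwa [← hvre], ?_⟩
  rw [Set.mem_singleton_iff] at hx
  subst hx
  rw [← hxy, hvre]
  simp [smul_eq_mul]

end Aux

section Key
variable {n : Type*} [Fintype n] [DecidableEq n] [Nonempty n]

lemma spec_real_bounds {Cm : Matrix n n ℂ} (hC : Cm.IsHermitian) :
    ∃ t₀ : ℝ, (t₀ : ℂ) ∈ spectrum ℂ Cm ∧
      ∀ t : ℝ, (t : ℂ) ∈ spectrum ℂ Cm → lamMin Cm ≤ t ∧ t ≤ lamMax Cm := by
  obtain ⟨z, hz⟩ := spectrum.nonempty Cm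
  have hzre := hC.isSelfAdjoint.mem_spectrum_eq_re hz
  have habs : ∀ t : ℝ, (t : ℂ) ∈ spectrum ℂ Cm → |t| ≤ ‖Cm‖ := by
    intro t ht
    have := spectrum.norm_le_norm_of_mem ht
    simpa using this
  have hba : BddAbove {t : ℝ | (t : ℂ) ∈ spectrum ℂ Cm} :=
    ⟨‖Cm‖, fun t ht => (abs_le.mp (habs t ht)).2⟩
  have hbb : BddBelow {t : ℝ | (t : ℂ) ∈ spectrum ℂ Cm} :=
    ⟨-‖Cm‖, fun t ht => (abs_le.mp (habs t ht)).1⟩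
  refine ⟨z.re, by rwa [← hzre], fun t ht => ⟨csInf_le hbb ht, le_csSup hba ht⟩⟩

lemma factor_bound {μ : ℝ} (hμ : 0 < μ) {Cm : Matrix n n ℂ} (hC : Cm.IsHermitian) :
    0 ≤ max (1 - μ * lamMin Cm) (μ * lamMax Cm - 1) ∧
    ‖(1 : Matrix n n ℂ) - (μ : ℂ) • Cm‖ ≤ max (1 - μ * lamMin Cm) (μ * lamMax Cm - 1) := by
  obtain ⟨t₀, ht₀, hbd⟩ := spec_real_bounds hC
  set m := max (1 - μ * lamMin Cm) (μ * lamMax Cm - 1) with hm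
  have key : ∀ t : ℝ, (t : ℂ) ∈ spectrum ℂ Cm → |1 - μ * t| ≤ m := by
    intro t ht
    obtain ⟨h1, h2⟩ := hbd t ht
    have e1 : μ * lamMin Cm ≤ μ * t := mul_le_mul_of_nonneg_left h1 hμ.le
    have e2 : μ * t ≤ μ * lamMax Cm := mul_le_mul_of_nonneg_left h2 hμ.le
    have ha := le_max_left (1 - μ * lamMin Cm) (μ * lamMax Cm - 1)
    have hb := le_max_right (1 - μ * lamMin Cm) (μ * lamMax Cm - 1)
    rw [abs_le]
    exact ⟨by linarith, by linarith⟩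
  have hm0 : 0 ≤ m := le_trans (abs_nonneg _) (key t₀ ht₀)
  refine ⟨hm0, norm_le_of_isSelfAdjoint ?_ hm0 ?_⟩
  · have hμs : IsSelfAdjoint ((μ : ℝ) : ℂ) := by
      rw [_root_.IsSelfAdjoint, Complex.star_def, Complex.conj_ofReal]
    exact (IsSelfAdjoint.one (Matrix n n ℂ)).sub (hμs.smul hC.isSelfAdjoint)
  · intro z hz
    obtain ⟨t, ht, rfl⟩ := spec_shape hμ.ne' hC hz
    have : (1 - (μ : ℂ) * (t : ℂ)) = ((1 - μ * t : ℝ) : ℂ) := by push_cast; ring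
    rw [this, Complex.norm_real, Real.norm_eq_abs]
    exact key t ht

end Key

lemma prodDesc_norm_le {M : ℕ} (hM : 1 ≤ M) (A : ℕ → Matrix (Fin M) (Fin M) ℂ) (a : ℕ)
    (f : ℕ → ℝ) (hf : ∀ j, ‖A (a + j)‖ ≤ f j) :
    ∀ len, ‖prodDesc A a len‖ ≤ ∏ j ∈ Finset.range len, f j := by
  haveI : Nonempty (Fin M) := ⟨⟨0, hM⟩⟩
  intro len
  induction len with
  | zero => simp [prodDesc]
  | succ l ih =>
    rw [Finset.prod_range_succ]
    calc ‖prodDesc A a (l + 1)‖ = ‖A (a + l) * prodDesc A a l‖ := rfl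
      _ ≤ ‖A (a + l)‖ * ‖prodDesc A a l‖ := norm_mul_le _ _
      _ ≤ f l * ∏ j ∈ Finset.range l, f j :=
          mul_le_mul (hf l) ih (norm_nonneg _) ((norm_nonneg _).trans (hf l))
      _ = (∏ j ∈ Finset.range l, f j) * f l := mul_comm _ _

open Fin.NatCast in
lemma prod_cycle (f : ℕ → ℝ) (N k : ℕ) :
    ∏ j ∈ Finset.range (N + 1), f ((k + j) % (N + 1))
      = ∏ j ∈ Finset.range (N + 1), f j := by
  have h1 : ∀ g : ℕ → ℝ, ∏ j ∈ Finset.range (N + 1), g j = ∏ i : Fin (N + 1), g i.val :=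
    fun g => (Fin.prod_univ_eq_prod_range g (N + 1)).symm
  rw [h1, h1]
  refine Fintype.prod_equiv (Equiv.addLeft (k : Fin (N + 1))) _ _ fun i => ?_
  congr 1
  show (k + i.val) % (N + 1) = ((k : Fin (N + 1)) + i).val
  rw [Fin.val_add, Fin.val_natCast, Nat.add_mod k i.val, Nat.mod_eq_of_lt i.isLt]

/-- **First sufficient condition for mean convergence**: if
`∏_{k=0}^{N₀−1} max(1 − μ λmin(C[k]), μ λmax(C[k]) − 1) < 1` then `ρ(Φ(k,k)) < 1`
for every `k ∈ {0,…,N₀−1}`. -/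
theorem lms_mean_convergence_sufficient_first
    {M N₀ : ℕ} (hM : 1 ≤ M) (hN : 1 ≤ N₀) (μ : ℝ) (hμ : 0 < μ)
    (C : ℕ → Matrix (Fin M) (Fin M) ℂ) (g : ℕ → Fin M → ℂ)
    (hC : ∀ k < N₀, (C k).PosSemidef)
    (hcond : ∏ k ∈ Finset.range N₀,
        max (1 - μ * lamMin (C k)) (μ * lamMax (C k) - 1) < 1) :
    ∀ k < N₀,
      specRad (prodDesc (fun l => (1 : Matrix (Fin M) (Fin M) ℂ) - (μ : ℂ) • C (l % N₀)) k N₀)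
        < 1 := by
  haveI : Nonempty (Fin M) := ⟨⟨0, hM⟩⟩
  obtain ⟨N, rfl⟩ : ∃ N, N₀ = N + 1 := ⟨N₀ - 1, by omega⟩
  intro k hk
  set A : ℕ → Matrix (Fin M) (Fin M) ℂ :=
    fun l => (1 : Matrix (Fin M) (Fin M) ℂ) - (μ : ℂ) • C (l % (N + 1)) with hA
  set m : ℕ → ℝ := fun l => max (1 - μ * lamMin (C l)) (μ * lamMax (C l) - 1) with hm
  have hfac : ∀ j, ‖A (k + j)‖ ≤ m ((k + j) % (N + 1)) := by
    intro j
    have hd : (k + j) % (N + 1) < N + 1 := Nat.mod_lt _ (by omega)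
    exact (factor_bound hμ (hC _ hd).1).2
  have hP := prodDesc_norm_le hM A k (fun j => m ((k + j) % (N + 1))) hfac (N + 1)
  rw [prod_cycle m N k] at hP
  have hPlt : ‖prodDesc A k (N + 1)‖ < 1 := lt_of_le_of_lt hP hcond
  have hspec : specRad (prodDesc A k (N + 1)) ≤ ‖prodDesc A k (N + 1)‖ := by
    apply csSup_le ((spectrum.nonempty _).image _)
    rintro x ⟨z, hz, rfl⟩
    simpa using spectrum.norm_le_norm_of_mem hz
  exact lt_of_le_of_lt hspec hPlt
end
end

section
/- Steady-state limit of the mean: if ρ(Φ(k,k)) < 1 for some k ∈ {0,…,N₀−1}, then I_M − Φ(k,k) is invertible and, for every initial vector m₀ ∈ ℂ^M, lim_{n→∞} m[nN₀+k] = −μ (I_M − Φ(k,k))⁻¹ b_k; moreover this limit equals the zero vector if and only if b_k = 0. -/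
open Matrix Filter
open scoped ComplexOrder ENNReal NNReal

noncomputable section

/-- The mean coefficients-error recursion
`m[n+1] = (I − μ C[n mod N₀]) m[n] − μ C[n mod N₀] g[n mod N₀]`. -/
def meanSeq {M : ℕ} (N₀ : ℕ) (μ : ℝ) (C : ℕ → Matrix (Fin M) (Fin M) ℂ)
    (g : ℕ → Fin M → ℂ) (m₀ : Fin M → ℂ) : ℕ → Fin M → ℂ
  | 0 => m₀
  | (n + 1) =>
      ((1 : Matrix (Fin M) (Fin M) ℂ) - (μ : ℂ) • C (n % N₀)) *ᵥ meanSeq N₀ μ C g m₀ n -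
        (μ : ℂ) • (C (n % N₀) *ᵥ g (n % N₀))

section Aux

variable {M : ℕ}

lemma prodDesc_zero (A : ℕ → Matrix (Fin M) (Fin M) ℂ) (a : ℕ) : prodDesc A a 0 = 1 := rfl

lemma prodDesc_succ (A : ℕ → Matrix (Fin M) (Fin M) ℂ) (a len : ℕ) :
    prodDesc A a (len + 1) = A (a + len) * prodDesc A a len := rfl

lemma prodDesc_congr {A B : ℕ → Matrix (Fin M) (Fin M) ℂ} {a b : ℕ}
    (h : ∀ j, A (a + j) = B (b + j)) : ∀ len, prodDesc A a len = prodDesc B b len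
  | 0 => rfl
  | (len + 1) => by
      rw [prodDesc_succ, prodDesc_succ, h len, prodDesc_congr h len]

lemma mulVec_sum' {ι : Type*} (s : Finset ι) (A : Matrix (Fin M) (Fin M) ℂ)
    (f : ι → (Fin M → ℂ)) : A *ᵥ (∑ i ∈ s, f i) = ∑ i ∈ s, A *ᵥ f i :=
  map_sum (A.mulVecLin) f s

lemma meanSeq_add (N₀ : ℕ) (μ : ℝ) (C : ℕ → Matrix (Fin M) (Fin M) ℂ)
    (g : ℕ → Fin M → ℂ) (m₀ : Fin M → ℂ) (a : ℕ) :
    ∀ t, meanSeq N₀ μ C g m₀ (a + t) =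
      prodDesc (fun l => (1 : Matrix (Fin M) (Fin M) ℂ) - (μ : ℂ) • C (l % N₀)) a t *ᵥ
          meanSeq N₀ μ C g m₀ a -
        (μ : ℂ) • ∑ i ∈ Finset.range t,
          prodDesc (fun l => (1 : Matrix (Fin M) (Fin M) ℂ) - (μ : ℂ) • C (l % N₀)) (a + i + 1)
              (t - 1 - i) *ᵥ (C ((a + i) % N₀) *ᵥ g ((a + i) % N₀))
  | 0 => by simp [prodDesc_zero, one_mulVec]
  | (t + 1) => by
      set A : ℕ → Matrix (Fin M) (Fin M) ℂ :=
        fun l => (1 : Matrix (Fin M) (Fin M) ℂ) - (μ : ℂ) • C (l % N₀) with hA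
      have h1 : a + (t + 1) = (a + t) + 1 := by omega
      rw [h1]
      show A (a + t) *ᵥ meanSeq N₀ μ C g m₀ (a + t) -
          (μ : ℂ) • (C ((a + t) % N₀) *ᵥ g ((a + t) % N₀)) = _
      rw [meanSeq_add N₀ μ C g m₀ a t]
      rw [mulVec_sub, mulVec_smul, mulVec_mulVec, ← prodDesc_succ]
      rw [mulVec_sum']
      have hsum : ∀ i ∈ Finset.range t,
          A (a + t) *ᵥ (prodDesc A (a + i + 1) (t - 1 - i) *ᵥ
            (C ((a + i) % N₀) *ᵥ g ((a + i) % N₀))) =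
          prodDesc A (a + i + 1) (t + 1 - 1 - i) *ᵥ
            (C ((a + i) % N₀) *ᵥ g ((a + i) % N₀)) := by
        intro i hi
        rw [Finset.mem_range] at hi
        rw [mulVec_mulVec]
        have h2 : t + 1 - 1 - i = (t - 1 - i) + 1 := by omega
        have h4 : a + t = (a + i + 1) + (t - 1 - i) := by omega
        rw [h2, prodDesc_succ, ← h4]
      rw [Finset.sum_congr rfl hsum]
      rw [Finset.sum_range_succ]
      have h3 : t + 1 - 1 - t = 0 := by omega
      rw [h3, prodDesc_zero, one_mulVec]
      rw [smul_add]
      abel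

lemma prodDesc_shift (N₀ : ℕ) (F : ℕ → Matrix (Fin M) (Fin M) ℂ) (n a len : ℕ) :
    prodDesc (fun l => F (l % N₀)) (n * N₀ + a) len = prodDesc (fun l => F (l % N₀)) a len :=
  prodDesc_congr (fun j => by rw [add_assoc, add_comm (n * N₀), Nat.add_mul_mod_self_right]) len

end Aux

attribute [local instance] Matrix.linftyOpSeminormedAddCommGroup
  Matrix.linftyOpNormedAddCommGroup Matrix.linftyOpNonUnitalSemiNormedRing
  Matrix.linftyOpSemiNormedRing Matrix.linftyOpNonUnitalNormedRing
  Matrix.linftyOpNormedRing Matrix.linftyOpNormedAlgebra Matrix.linftyOpNormedSpace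
  Matrix.linftyOpIsBoundedSMul

/-- **Steady-state limit of the mean**: if `ρ(Φ(k,k)) < 1` then `I − Φ(k,k)` is
invertible and `m[nN₀+k] → −μ (I − Φ(k,k))⁻¹ b_k`; the limit is zero iff `b_k = 0`. -/
theorem meanSeq_steady_state_limit
    {M N₀ : ℕ} (hM : 1 ≤ M) (hN : 1 ≤ N₀) (μ : ℝ) (hμ : 0 < μ)
    (C : ℕ → Matrix (Fin M) (Fin M) ℂ) (g : ℕ → Fin M → ℂ)
    (hC : ∀ k < N₀, (C k).PosSemidef)
    (bk : ℕ → Fin M → ℂ)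
    (hbk : ∀ k, bk k = ∑ l ∈ Finset.Icc k (N₀ - 1 + k),
      prodDesc (fun l' => (1 : Matrix (Fin M) (Fin M) ℂ) - (μ : ℂ) • C (l' % N₀))
          (l + 1) (N₀ + k - (l + 1)) *ᵥ (C (l % N₀) *ᵥ g (l % N₀)))
    (k : ℕ) (hk : k < N₀)
    (hρ : specRad
      (prodDesc (fun l => (1 : Matrix (Fin M) (Fin M) ℂ) - (μ : ℂ) • C (l % N₀)) k N₀) < 1) :
    IsUnit ((1 : Matrix (Fin M) (Fin M) ℂ) -
        prodDesc (fun l => (1 : Matrix (Fin M) (Fin M) ℂ) - (μ : ℂ) • C (l % N₀)) k N₀) ∧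
      (∀ m₀ : Fin M → ℂ,
        Tendsto (fun n => meanSeq N₀ μ C g m₀ (n * N₀ + k)) atTop
          (nhds (-((μ : ℂ) • (((1 : Matrix (Fin M) (Fin M) ℂ) -
            prodDesc (fun l => (1 : Matrix (Fin M) (Fin M) ℂ) - (μ : ℂ) • C (l % N₀)) k N₀)⁻¹
              *ᵥ bk k))))) ∧
      ((-((μ : ℂ) • (((1 : Matrix (Fin M) (Fin M) ℂ) -
          prodDesc (fun l => (1 : Matrix (Fin M) (Fin M) ℂ) - (μ : ℂ) • C (l % N₀)) k N₀)⁻¹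
            *ᵥ bk k)) = 0) ↔ bk k = 0) := by
  have hM' : Nonempty (Fin M) := ⟨⟨0, hM⟩⟩
  set A : ℕ → Matrix (Fin M) (Fin M) ℂ :=
    fun l => (1 : Matrix (Fin M) (Fin M) ℂ) - (μ : ℂ) • C (l % N₀) with hA
  set Φ : Matrix (Fin M) (Fin M) ℂ := prodDesc A k N₀ with hΦ
  set B : Matrix (Fin M) (Fin M) ℂ := (1 : Matrix (Fin M) (Fin M) ℂ) - Φ with hB
  set u : Fin M → ℂ := B⁻¹ *ᵥ bk k with hu
  -- invertibility of B = 1 - Φ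
  have hbd : BddAbove ((fun z : ℂ => ‖z‖) '' spectrum ℂ Φ) := by
    refine ⟨‖Φ‖ * ‖(1 : Matrix (Fin M) (Fin M) ℂ)‖, ?_⟩
    rintro x ⟨z, hz, rfl⟩
    simpa using spectrum.norm_le_norm_mul_of_mem hz
  have hspec_lt : ∀ z ∈ spectrum ℂ Φ, ‖z‖ < 1 := fun z hz =>
    lt_of_le_of_lt (le_csSup hbd ⟨z, hz, rfl⟩) hρ
  have hone : (1 : ℂ) ∉ spectrum ℂ Φ := fun h => absurd (hspec_lt 1 h) (by simp)
  have hBunit : IsUnit B := by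
    have h := spectrum.notMem_iff.mp hone
    rwa [_root_.map_one] at h
  have hdet : IsUnit B.det := (Matrix.isUnit_iff_isUnit_det B).mp hBunit
  have hBBinv : B * B⁻¹ = 1 := Matrix.mul_nonsing_inv B hdet
  have hBv : ∀ v : Fin M → ℂ, B *ᵥ (B⁻¹ *ᵥ v) = v := fun v => by
    rw [mulVec_mulVec, hBBinv, one_mulVec]
  -- spectral radius in ℝ≥0∞ is < 1
  have hsr : spectralRadius ℂ Φ < 1 := by
    rcases Set.eq_empty_or_nonempty (spectrum ℂ Φ) with he | hne
    · simp [spectralRadius, he]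
    · have h := spectrum.spectralRadius_lt_of_forall_lt_of_nonempty hne
        (r := 1) (fun z hz => by
          have h2 := hspec_lt z hz
          rw [← NNReal.coe_lt_coe]
          simpa using h2)
      simpa using h
  -- eventual geometric bound on ‖Φ ^ n‖
  obtain ⟨r, hr1, hr2⟩ := ENNReal.lt_iff_exists_nnreal_btwn.mp hsr
  have hr2' : (r : ℝ) < 1 := by exact_mod_cast hr2
  have hgel := spectrum.pow_nnnorm_pow_one_div_tendsto_nhds_spectralRadius Φ
  have hev : ∀ᶠ n : ℕ in atTop, (‖Φ ^ n‖₊ : ℝ≥0∞) ^ (1 / (n : ℝ)) < (r : ℝ≥0∞) :=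
    hgel.eventually_lt_const hr1
  have hevn : ∀ᶠ n : ℕ in atTop, ‖Φ ^ n‖ ≤ (r : ℝ) ^ n := by
    filter_upwards [hev, eventually_ge_atTop 1] with n hn hn1
    have hn0 : (n : ℝ) ≠ 0 := by
      exact_mod_cast Nat.one_le_iff_ne_zero.mp hn1
    have hx : (‖Φ ^ n‖₊ : ℝ≥0∞) ≤ ((r ^ n : ℝ≥0) : ℝ≥0∞) := by
      calc (‖Φ ^ n‖₊ : ℝ≥0∞) = ((‖Φ ^ n‖₊ : ℝ≥0∞) ^ (1 / (n : ℝ))) ^ (n : ℝ) := by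
            rw [← ENNReal.rpow_mul, one_div, inv_mul_cancel₀ hn0, ENNReal.rpow_one]
        _ ≤ ((r : ℝ≥0∞)) ^ (n : ℝ) := ENNReal.rpow_le_rpow hn.le (Nat.cast_nonneg n)
        _ = ((r ^ n : ℝ≥0) : ℝ≥0∞) := by rw [ENNReal.rpow_natCast, ENNReal.coe_pow]
    have hx' : ‖Φ ^ n‖₊ ≤ r ^ n := by exact_mod_cast hx
    calc ‖Φ ^ n‖ = ((‖Φ ^ n‖₊ : ℝ)) := (coe_nnnorm _).symm
      _ ≤ ((r ^ n : ℝ≥0) : ℝ) := by exact_mod_cast hx'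
      _ = (r : ℝ) ^ n := by push_cast; ring
  -- fixed point identity
  have hfix : Φ *ᵥ (-((μ : ℂ) • u)) - (μ : ℂ) • bk k = -((μ : ℂ) • u) := by
    have h2 : u - Φ *ᵥ u = bk k := by
      have h := hBv (bk k)
      rw [← hu] at h
      rw [hB, sub_mulVec, one_mulVec] at h
      exact h
    rw [← h2, mulVec_neg, mulVec_smul, smul_sub]
    abel
  refine ⟨hBunit, ?_, ?_⟩
  · -- convergence
    intro m₀
    have hrec : ∀ n, meanSeq N₀ μ C g m₀ ((n + 1) * N₀ + k) =
        Φ *ᵥ meanSeq N₀ μ C g m₀ (n * N₀ + k) - (μ : ℂ) • bk k := by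
      intro n
      have h1 : (n + 1) * N₀ + k = (n * N₀ + k) + N₀ := by ring
      have h2 := meanSeq_add N₀ μ C g m₀ (n * N₀ + k) N₀
      rw [← hA] at h2
      rw [h1, h2]
      have h3 : prodDesc A (n * N₀ + k) N₀ = Φ := by
        rw [hΦ, hA]
        exact prodDesc_shift N₀
          (fun j => (1 : Matrix (Fin M) (Fin M) ℂ) - (μ : ℂ) • C j) n k N₀
      have h4 : ∑ i ∈ Finset.range N₀,
          prodDesc A (n * N₀ + k + i + 1) (N₀ - 1 - i) *ᵥ
            (C ((n * N₀ + k + i) % N₀) *ᵥ g ((n * N₀ + k + i) % N₀)) = bk k := by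
        rw [hbk k]
        rw [show ∑ l ∈ Finset.Icc k (N₀ - 1 + k),
            prodDesc A (l + 1) (N₀ + k - (l + 1)) *ᵥ (C (l % N₀) *ᵥ g (l % N₀)) =
            ∑ i ∈ Finset.range N₀,
              prodDesc A (k + i + 1) (N₀ + k - (k + i + 1)) *ᵥ
                (C ((k + i) % N₀) *ᵥ g ((k + i) % N₀)) from
          Finset.sum_nbij' (fun l => l - k) (fun i => k + i)
            (fun a ha => by simp only [Finset.mem_Icc] at ha; simp only [Finset.mem_range]; omega)
            (fun a ha => by simp only [Finset.mem_range] at ha; simp only [Finset.mem_Icc]; omega)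
            (fun a ha => by simp only [Finset.mem_Icc] at ha; show k + (a - k) = a; omega)
            (fun a ha => by show (k + a) - k = a; omega)
            (fun a ha => by
              simp only [Finset.mem_Icc] at ha
              have : k + (a - k) = a := by omega
              rw [this])]
        refine Finset.sum_congr rfl fun i hi => ?_
        rw [Finset.mem_range] at hi
        have e1 : n * N₀ + k + i + 1 = n * N₀ + (k + i + 1) := by ring
        have e2 : (n * N₀ + k + i) % N₀ = (k + i) % N₀ := by
          rw [show n * N₀ + k + i = k + i + n * N₀ from by ring, Nat.add_mul_mod_self_right]
        have e3 : N₀ + k - (k + i + 1) = N₀ - 1 - i := by omega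
        rw [e1, e2, e3, hA]
        rw [prodDesc_shift N₀
          (fun j => (1 : Matrix (Fin M) (Fin M) ℂ) - (μ : ℂ) • C j) n (k + i + 1) (N₀ - 1 - i)]
      rw [h3, h4]
    have hclosed : ∀ n, meanSeq N₀ μ C g m₀ (n * N₀ + k) =
        Φ ^ n *ᵥ (meanSeq N₀ μ C g m₀ (0 * N₀ + k) - (-((μ : ℂ) • u))) + (-((μ : ℂ) • u)) := by
      intro n
      induction n with
      | zero => simp
      | succ n ih =>
          rw [hrec n, ih, mulVec_add, mulVec_mulVec, ← pow_succ', add_sub_assoc, hfix]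
    have hzero : Tendsto
        (fun n => Φ ^ n *ᵥ (meanSeq N₀ μ C g m₀ (0 * N₀ + k) - (-((μ : ℂ) • u))))
        atTop (nhds 0) := by
      have hbound : ∀ᶠ n in atTop,
          ‖Φ ^ n *ᵥ (meanSeq N₀ μ C g m₀ (0 * N₀ + k) - (-((μ : ℂ) • u)))‖ ≤
            (r : ℝ) ^ n * ‖meanSeq N₀ μ C g m₀ (0 * N₀ + k) - (-((μ : ℂ) • u))‖ := by
        filter_upwards [hevn] with n hn
        calc ‖Φ ^ n *ᵥ (meanSeq N₀ μ C g m₀ (0 * N₀ + k) - (-((μ : ℂ) • u)))‖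
            ≤ ‖Φ ^ n‖ * ‖meanSeq N₀ μ C g m₀ (0 * N₀ + k) - (-((μ : ℂ) • u))‖ :=
              Matrix.linfty_opNorm_mulVec _ _
          _ ≤ (r : ℝ) ^ n * ‖meanSeq N₀ μ C g m₀ (0 * N₀ + k) - (-((μ : ℂ) • u))‖ :=
              mul_le_mul_of_nonneg_right hn (norm_nonneg _)
      have hg : Tendsto
          (fun n => (r : ℝ) ^ n * ‖meanSeq N₀ μ C g m₀ (0 * N₀ + k) - (-((μ : ℂ) • u))‖)
          atTop (nhds 0) := by
        simpa using (tendsto_pow_atTop_nhds_zero_of_lt_one r.coe_nonneg hr2').mul_const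
          ‖meanSeq N₀ μ C g m₀ (0 * N₀ + k) - (-((μ : ℂ) • u))‖
      exact squeeze_zero_norm' hbound hg
    have hlim := hzero.add (tendsto_const_nhds (x := -((μ : ℂ) • u)))
    rw [zero_add] at hlim
    exact Tendsto.congr (fun n => (hclosed n).symm) hlim
  · -- limit zero iff bk = 0
    constructor
    · intro h
      have hu0 : u = 0 := by
        have h1 : (μ : ℂ) • u = 0 := by rwa [neg_eq_zero] at h
        rcases smul_eq_zero.mp h1 with h' | h'
        · exact absurd h' (by exact_mod_cast hμ.ne')
        · exact h'
      have h2 : B *ᵥ u = bk k := by rw [hu]; exact hBv (bk k)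
      rw [hu0, mulVec_zero] at h2
      exact h2.symm
    · intro h
      rw [hu, h, mulVec_zero, smul_zero, neg_zero]
end
end

section
/- Positive definiteness via the block companion matrix: let A and B be Hermitian n×n complex matrices and μ > 0 real. Define the 2n×2n complex matrix H := (1/2)·[[A, −B],[2 I_n, 0]] (block form). If either H has no real positive eigenvalue, or μ·t < 1 for every real positive eigenvalue t of H, then the Hermitian matrix 2 I_n − μA + μ²B is positive definite. -/
open Matrix
open scoped ComplexOrder InnerProductSpace

noncomputable section
variable {E : Type*} [NormedAddCommGroup E] [InnerProductSpace ℂ E]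

/-- The infimum of the Rayleigh quotient of a continuous linear operator. -/
def rinfE (T : E →L[ℂ] E) : ℝ :=
  ⨅ x : {x : E // x ≠ 0}, RCLike.re (⟪T x, (x : E)⟫_ℂ) / ‖(x : E)‖ ^ 2

lemma aux_bddBelow (T : E →L[ℂ] E) :
    BddBelow (Set.range fun x : {x : E // x ≠ 0} =>
      RCLike.re (⟪T x, (x : E)⟫_ℂ) / ‖(x : E)‖ ^ 2) := by
  refine ⟨-‖T‖, fun r hr => ?_⟩
  obtain ⟨x, rfl⟩ := hr
  have hx : (0 : ℝ) < ‖(x : E)‖ ^ 2 := by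
    have := norm_pos_iff.mpr x.2
    positivity
  rw [le_div_iff₀ hx]
  have h1 : ‖(⟪T x, (x : E)⟫_ℂ)‖ ≤ ‖T‖ * ‖(x : E)‖ ^ 2 := by
    calc ‖(⟪T x, (x : E)⟫_ℂ)‖ ≤ ‖T (x : E)‖ * ‖(x : E)‖ := norm_inner_le_norm _ _
    _ ≤ (‖T‖ * ‖(x : E)‖) * ‖(x : E)‖ :=
        mul_le_mul_of_nonneg_right (T.le_opNorm _) (norm_nonneg _)
    _ = ‖T‖ * ‖(x : E)‖ ^ 2 := by ring
  have h2 := abs_le.mp ((RCLike.abs_re_le_norm (⟪T x, (x : E)⟫_ℂ)).trans h1)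
  linarith [h2.1]

lemma aux_rinf_le [Nontrivial E] (T T' : E →L[ℂ] E) :
    rinfE T ≤ rinfE T' + ‖T - T'‖ := by
  have key : ∀ x : {x : E // x ≠ 0},
      RCLike.re (⟪T x, (x : E)⟫_ℂ) / ‖(x : E)‖ ^ 2 ≤
      RCLike.re (⟪T' x, (x : E)⟫_ℂ) / ‖(x : E)‖ ^ 2 + ‖T - T'‖ := by
    intro x
    have hx : (0 : ℝ) < ‖(x : E)‖ ^ 2 := by
      have := norm_pos_iff.mpr x.2
      positivity
    rw [div_add' _ _ _ (ne_of_gt hx), div_le_div_iff_of_pos_right hx]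
    have h1 : RCLike.re (⟪T x, (x : E)⟫_ℂ) - RCLike.re (⟪T' x, (x : E)⟫_ℂ)
        = RCLike.re (⟪(T - T') (x : E), (x : E)⟫_ℂ) := by
      rw [ContinuousLinearMap.sub_apply, inner_sub_left, map_sub]
    have h2 : RCLike.re (⟪(T - T') (x : E), (x : E)⟫_ℂ) ≤ ‖T - T'‖ * ‖(x : E)‖ ^ 2 := by
      calc RCLike.re (⟪(T - T') (x : E), (x : E)⟫_ℂ)
          ≤ ‖(⟪(T - T') (x : E), (x : E)⟫_ℂ)‖ := RCLike.re_le_norm _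
        _ ≤ ‖(T - T') (x : E)‖ * ‖(x : E)‖ := norm_inner_le_norm _ _
        _ ≤ (‖T - T'‖ * ‖(x : E)‖) * ‖(x : E)‖ :=
            mul_le_mul_of_nonneg_right ((T - T').le_opNorm _) (norm_nonneg _)
        _ = ‖T - T'‖ * ‖(x : E)‖ ^ 2 := by ring
    linarith
  haveI : Nonempty {x : E // x ≠ 0} := ⟨⟨Classical.choose (exists_ne (0 : E)),
    Classical.choose_spec (exists_ne (0 : E))⟩⟩
  have h3 : rinfE T - ‖T - T'‖ ≤ rinfE T' := by
    refine le_ciInf fun x => ?_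
    have h4 : rinfE T ≤ RCLike.re (⟪T x, (x : E)⟫_ℂ) / ‖(x : E)‖ ^ 2 :=
      ciInf_le (aux_bddBelow T) x
    have h5 := key x
    linarith
  linarith

lemma aux_rinf_continuous [Nontrivial E] {f : ℝ → E →L[ℂ] E} (hf : Continuous f) :
    Continuous fun s => rinfE (f s) := by
  have hlip : LipschitzWith 1 (rinfE (E := E)) := by
    refine LipschitzWith.of_dist_le_mul fun T T' => ?_
    rw [Real.dist_eq, dist_eq_norm, NNReal.coe_one, one_mul]
    have h1 := aux_rinf_le T T'
    have h2 := aux_rinf_le T' T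
    rw [norm_sub_rev] at h2
    rw [abs_le]
    constructor <;> linarith
  exact hlip.continuous.comp hf

set_option maxHeartbeats 1000000 in
/-- **Positive definiteness via the block companion matrix**: for `A, B` Hermitian and
`H = (1/2)·[[A, −B],[2Iₙ, 0]]`, if either `H` has no real positive eigenvalue, or
`μ·t < 1` for every real positive eigenvalue `t` of `H`, then `2Iₙ − μA + μ²B` is
positive definite. -/
theorem posDef_of_block_companion
    {n : ℕ} (hn : 1 ≤ n) (A B : Matrix (Fin n) (Fin n) ℂ)
    (hA : A.IsHermitian) (hB : B.IsHermitian) (μ : ℝ) (hμ : 0 < μ)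
    (H : Matrix (Fin n ⊕ Fin n) (Fin n ⊕ Fin n) ℂ)
    (hH : H = (1 / 2 : ℂ) •
      Matrix.fromBlocks A (-B) ((2 : ℂ) • (1 : Matrix (Fin n) (Fin n) ℂ)) 0)
    (hcond : (∀ t : ℝ, 0 < t → (t : ℂ) ∉ spectrum ℂ H) ∨
      (∀ t : ℝ, 0 < t → (t : ℂ) ∈ spectrum ℂ H → μ * t < 1)) :
    ((2 : ℂ) • (1 : Matrix (Fin n) (Fin n) ℂ) - (μ : ℂ) • A + ((μ : ℂ)) ^ 2 • B).PosDef := by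
  set E := EuclideanSpace ℂ (Fin n) with hE
  haveI : Nonempty (Fin n) := ⟨⟨0, hn⟩⟩
  haveI hNT : Nontrivial E :=
    ⟨WithLp.toLp 2 (fun _ => 1 : Fin n → ℂ), 0,
      fun h => (one_ne_zero : (1 : ℂ) ≠ 0) (by simpa using congrArg (fun v : E => v ⟨0, hn⟩) h)⟩
  haveI : Nonempty {x : E // x ≠ 0} := ⟨⟨Classical.choose (exists_ne (0 : E)),
    Classical.choose_spec (exists_ne (0 : E))⟩⟩
  set M : ℝ → Matrix (Fin n) (Fin n) ℂ := fun s =>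
    (2 : ℂ) • 1 - (s : ℂ) • A + (s : ℂ) ^ 2 • B with hMdef
  have hMherm : ∀ s : ℝ, (M s).IsHermitian := by
    intro s
    show ((2 : ℂ) • 1 - (s : ℂ) • A + (s : ℂ) ^ 2 • B).IsHermitian
    simp only [Matrix.IsHermitian, conjTranspose_add, conjTranspose_sub, conjTranspose_smul,
      conjTranspose_one, hA.eq, hB.eq, star_pow, Complex.star_def, Complex.conj_ofReal,
      map_ofNat]
  set T : ℝ → (E →L[ℂ] E) := fun s => Matrix.toEuclideanCLM (𝕜 := ℂ) (M s) with hTdef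
  have hTsa : ∀ s : ℝ, IsSelfAdjoint (T s) := by
    intro s
    show star (Matrix.toEuclideanCLM (𝕜 := ℂ) (M s)) = _
    rw [← map_star]
    congr 1
    exact hMherm s
  have hTcont : Continuous T := by
    have hT : ∀ s : ℝ, T s = (2 : ℂ) • Matrix.toEuclideanCLM (𝕜 := ℂ) (1 : Matrix (Fin n) (Fin n) ℂ)
        - (s : ℂ) • Matrix.toEuclideanCLM (𝕜 := ℂ) A
        + (s : ℂ) ^ 2 • Matrix.toEuclideanCLM (𝕜 := ℂ) B := by
      intro s
      show Matrix.toEuclideanCLM (𝕜 := ℂ) ((2 : ℂ) • 1 - (s : ℂ) • A + (s : ℂ) ^ 2 • B) = _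
      simp only [map_add, map_sub, _root_.map_smul]
    rw [show T = _ from funext hT]
    fun_prop
  set f : ℝ → ℝ := fun s => rinfE (T s) with hfdef
  have hfcont : Continuous f := aux_rinf_continuous hTcont
  have hf0 : f 0 = 2 := by
    have hM0 : M 0 = (2 : ℂ) • 1 := by
      show (2 : ℂ) • 1 - ((0:ℝ) : ℂ) • A + ((0:ℝ) : ℂ) ^ 2 • B = (2 : ℂ) • 1
      norm_num
    have hT0 : ∀ x : E, T 0 x = (2 : ℂ) • x := by
      intro x
      show Matrix.toEuclideanCLM (𝕜 := ℂ) (M 0) x = _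
      rw [hM0, _root_.map_smul, _root_.map_one]
      rfl
    show rinfE (T 0) = 2
    unfold rinfE
    have : (fun x : {x : E // x ≠ 0} =>
        RCLike.re (⟪T 0 x, (x : E)⟫_ℂ) / ‖(x : E)‖ ^ 2) = fun _ => (2 : ℝ) := by
      funext x
      have hx : (0 : ℝ) < ‖(x : E)‖ ^ 2 := by
        have := norm_pos_iff.mpr x.2
        positivity
      have h2 : RCLike.re (⟪T 0 (x : E), (x : E)⟫_ℂ) = 2 * ‖(x : E)‖ ^ 2 := by
        rw [hT0 (x : E), inner_smul_left, inner_self_eq_norm_sq_to_K]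
        simp [Complex.mul_re, ← Complex.ofReal_pow]
      rw [h2, mul_div_assoc, div_self (ne_of_gt hx), mul_one]
    rw [this, ciInf_const]
  -- key: f never vanishes on (0, μ]
  have hsing : ∀ s : ℝ, 0 < s → s ≤ μ → f s ≠ 0 := by
    intro s hs hsμ hfs
    have hsym : (T s : E →ₗ[ℂ] E).IsSymmetric := (hTsa s).isSymmetric
    have heig := hsym.hasEigenvalue_iInf_of_finiteDimensional
    have hiinf : (⨅ x : {x : E // x ≠ 0},
        RCLike.re (⟪(T s : E →ₗ[ℂ] E) x, (x : E)⟫_ℂ) / ‖(x : E)‖ ^ 2) = f s := rfl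
    rw [hiinf, hfs] at heig
    have heig0 : Module.End.HasEigenvalue ((T s : E →ₗ[ℂ] E)) (0 : ℂ) := by
      simpa using heig
    obtain ⟨x, hx⟩ := heig0.exists_hasEigenvector
    have hx0 : T s x = 0 := by
      have h1 := hx.apply_eq_smul
      simpa using h1
    set y : Fin n → ℂ := (WithLp.equiv 2 (Fin n → ℂ)) x with hydef
    have hy0 : y ≠ 0 := by
      intro h
      apply hx.2
      have := congrArg (WithLp.equiv 2 (Fin n → ℂ)).symm h
      simpa [hydef] using this
    have hy : M s *ᵥ y = 0 := by
      have h1 : (WithLp.equiv 2 (Fin n → ℂ)) (T s x)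
          = Matrix.toLin' (M s) ((WithLp.equiv 2 (Fin n → ℂ)) x) :=
        Matrix.ofLp_toEuclideanCLM (𝕜 := ℂ) (M s) x
      rw [hx0, Matrix.toLin'_apply] at h1
      simpa [hydef] using h1.symm
    have hypt : ∀ i, (2 : ℂ) * y i - (s : ℂ) * (A *ᵥ y) i + (s : ℂ) ^ 2 * (B *ᵥ y) i = 0 := by
      intro i
      have h2 := congrFun hy i
      simpa [hMdef, Matrix.add_mulVec, Matrix.sub_mulVec, Matrix.smul_mulVec,
        Matrix.one_mulVec] using h2
    have hsne : (s : ℂ) ≠ 0 := Complex.ofReal_ne_zero.mpr (ne_of_gt hs)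
    have ht : 0 < s⁻¹ := inv_pos.mpr hs
    have hkey : ((s⁻¹ : ℝ) : ℂ) ∈ spectrum ℂ H := by
      rw [spectrum.mem_iff]
      intro hunit
      rw [Algebra.algebraMap_eq_smul_one, Matrix.isUnit_iff_isUnit_det] at hunit
      have hdet : (((s⁻¹ : ℝ) : ℂ) • (1 : Matrix (Fin n ⊕ Fin n) (Fin n ⊕ Fin n) ℂ) - H).det
          = 0 := by
        rw [← Matrix.exists_mulVec_eq_zero_iff]
        refine ⟨Sum.elim (((s⁻¹ : ℝ) : ℂ) • y) y, ?_, ?_⟩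
        · intro hv
          apply hy0
          funext i
          exact congrFun hv (Sum.inr i)
        · rw [Matrix.sub_mulVec, Matrix.smul_mulVec, Matrix.one_mulVec, hH,
            Matrix.smul_mulVec, Matrix.fromBlocks_mulVec]
          simp only [Sum.elim_comp_inl, Sum.elim_comp_inr, Matrix.mulVec_smul]
          funext i
          obtain i | i := i
          · simp only [Pi.sub_apply, Pi.smul_apply, Sum.elim_inl, Matrix.mulVec_smul,
              Matrix.neg_mulVec, Pi.add_apply, Pi.neg_apply, smul_eq_mul, Pi.zero_apply,
              Complex.ofReal_inv]
            field_simp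
            linear_combination hypt i
          · simp only [Pi.sub_apply, Pi.smul_apply, Sum.elim_inr, Matrix.mulVec_smul,
              Matrix.smul_mulVec, Matrix.one_mulVec, Matrix.zero_mulVec,
              Pi.add_apply, smul_eq_mul, Pi.zero_apply, add_zero, Complex.ofReal_inv]
            field_simp
            ring
      rw [hdet] at hunit
      exact (by simp : ¬ IsUnit (0 : ℂ)) hunit
    rcases hcond with h | h
    · exact h s⁻¹ ht hkey
    · have h2 := h s⁻¹ ht hkey
      have h3 : s * s⁻¹ = 1 := mul_inv_cancel₀ (ne_of_gt hs)
      nlinarith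
  have hfμ : 0 < f μ := by
    by_contra hle
    push_neg at hle
    have h0mem : (0 : ℝ) ∈ Set.Icc (f μ) (f 0) := ⟨hle, by rw [hf0]; norm_num⟩
    obtain ⟨s₀, hs₀mem, hfs₀⟩ :=
      intermediate_value_Icc' (le_of_lt hμ) hfcont.continuousOn h0mem
    have hs₀pos : 0 < s₀ := by
      rcases lt_or_eq_of_le hs₀mem.1 with h | h
      · exact h
      · exfalso; rw [← h, hf0] at hfs₀; norm_num at hfs₀
    exact hsing s₀ hs₀pos hs₀mem.2 hfs₀
  -- conclude positive definiteness
  show (M μ).PosDef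
  refine Matrix.posDef_iff_dotProduct_mulVec.mpr ⟨hMherm μ, fun x hx => ?_⟩
  set x' : E := (WithLp.equiv 2 (Fin n → ℂ)).symm x with hx'def
  have hx' : x' ≠ 0 := by
    intro h
    apply hx
    have := congrArg (WithLp.equiv 2 (Fin n → ℂ)) h
    simpa [hx'def] using this
  have hinner : (⟪x', T μ x'⟫_ℂ) = dotProduct (star x) (M μ *ᵥ x) := by
    rw [EuclideanSpace.inner_eq_star_dotProduct]
    show dotProduct ((Matrix.toEuclideanCLM (𝕜 := ℂ) (M μ) x').ofLp) (star x'.ofLp) = _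
    rw [Matrix.ofLp_toEuclideanCLM, dotProduct_comm]
    rfl
  have hre : 0 < (⟪x', T μ x'⟫_ℂ).re := by
    have hnx : (0 : ℝ) < ‖x'‖ ^ 2 := by
      have := norm_pos_iff.mpr hx'
      positivity
    have h1 : f μ ≤ RCLike.re (⟪T μ x', x'⟫_ℂ) / ‖x'‖ ^ 2 :=
      ciInf_le (aux_bddBelow (T μ)) ⟨x', hx'⟩
    have h2 : 0 < RCLike.re (⟪T μ x', x'⟫_ℂ) := by
      have := div_pos_iff.mp (lt_of_lt_of_le hfμ h1)
      rcases this with h | h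
      · exact h.1
      · linarith [h.2, hnx]
    have h3 : RCLike.re (⟪T μ x', x'⟫_ℂ) = RCLike.re (⟪x', T μ x'⟫_ℂ) :=
      inner_re_symm _ _
    rw [h3] at h2
    exact h2
  have him : (⟪x', T μ x'⟫_ℂ).im = 0 := by
    have hsym := (hTsa μ).isSymmetric
    have : (starRingEnd ℂ) (⟪x', T μ x'⟫_ℂ) = (⟪x', T μ x'⟫_ℂ) := by
      rw [inner_conj_symm]
      exact hsym x' x'
    exact Complex.conj_eq_iff_im.mp this
  rw [← hinner, Complex.lt_def]
  exact ⟨by simp only [Complex.zero_re]; exact hre, by simp only [Complex.zero_im]; exact him.symm⟩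
end
end
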